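/- Let μ₁ be a measure on (0,∞) with μ₁([r,∞)) < ∞ for all r > 0, and let μ₂ be a probability measure on the non-negative unit sphere S of a norm on ℝ^d. Define μ(A) := (μ₁ ⊗ μ₂)({(m₁, m₂) : m₁·m₂ ∈ A}). Then μ satisfies μ({x ∈ [0,∞)^d : x_i > ε}) < ∞ for every coordinate i and every ε > 0, hence μ is an exponent measure of a max-id random vector. -/

import Mathlib

open MeasureTheory
open scoped ENNReal

/-- Type synonym to carry the custom norm. -/
def MyE (d : ℕ) : Type := Fin d → ℝ

instance (d : ℕ) : AddCommGroup (MyE d) := inferInstanceAs (AddCommGroup (Fin d → ℝ))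
noncomputable instance (d : ℕ) : Module ℝ (MyE d) := inferInstanceAs (Module ℝ (Fin d → ℝ))
instance (d : ℕ) : FiniteDimensional ℝ (MyE d) :=
  inferInstanceAs (FiniteDimensional ℝ (Fin d → ℝ))

lemma coord_bound {d : ℕ} (nrm : (Fin d → ℝ) → ℝ)
    (hnn : ∀ x, 0 ≤ nrm x) (hdef : ∀ x, nrm x = 0 ↔ x = 0)
    (hhom : ∀ (c : ℝ) (x), nrm (c • x) = |c| * nrm x)
    (htri : ∀ x y, nrm (x + y) ≤ nrm x + nrm y) (i : Fin d) :
    ∃ C : ℝ, 0 < C ∧ ∀ x : Fin d → ℝ, |x i| ≤ C * nrm x := by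
  let n : AddGroupNorm (MyE d) :=
    { toFun := nrm
      map_zero' := (hdef 0).2 rfl
      add_le' := htri
      neg' := fun x => by
        have : -x = (-1 : ℝ) • x := by simp
        rw [this]; exact (hhom (-1) x).trans (by rw [abs_neg, abs_one, one_mul])
      eq_zero_of_map_eq_zero' := fun x hx => (hdef x).1 hx }
  letI : NormedAddCommGroup (MyE d) := n.toNormedAddCommGroup
  letI : NormedSpace ℝ (MyE d) :=
    { norm_smul_le := fun c x => le_of_eq (hhom c x) }
  let f : MyE d →ₗ[ℝ] ℝ :=
    { toFun := fun x => x i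
      map_add' := fun _ _ => rfl
      map_smul' := fun _ _ => rfl }
  have hcont : Continuous f := f.continuous_of_finiteDimensional
  let g : MyE d →L[ℝ] ℝ := ⟨f, hcont⟩
  refine ⟨max ‖g‖ 1, lt_of_lt_of_le one_pos (le_max_right _ _), fun x => ?_⟩
  have h1 : |x i| ≤ ‖g‖ * nrm x := by
    have := g.le_opNorm (x : MyE d)
    exact this
  have h2 : 0 ≤ nrm x := hnn x
  calc |x i| ≤ ‖g‖ * nrm x := h1
    _ ≤ max ‖g‖ 1 * nrm x := by
        exact mul_le_mul_of_nonneg_right (le_max_left _ _) h2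

theorem stmt9 {d : ℕ} (μ₁ : Measure ℝ) [SigmaFinite μ₁]
    (hμ₁supp : μ₁ {s | s ≤ 0} = 0)
    (hμ₁fin : ∀ r : ℝ, 0 < r → μ₁ (Set.Ici r) < ⊤)
    (nrm : (Fin d → ℝ) → ℝ)
    (hnn : ∀ x, 0 ≤ nrm x) (hdef : ∀ x, nrm x = 0 ↔ x = 0)
    (hhom : ∀ (c : ℝ) (x), nrm (c • x) = |c| * nrm x)
    (htri : ∀ x y, nrm (x + y) ≤ nrm x + nrm y)
    (μ₂ : Measure (Fin d → ℝ)) [IsProbabilityMeasure μ₂]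
    (hμ₂supp : μ₂ {x | nrm x = 1 ∧ ∀ i, 0 ≤ x i}ᶜ = 0)
    (μ : Measure (Fin d → ℝ))
    (hμ : μ = Measure.map (fun p : ℝ × (Fin d → ℝ) => p.1 • p.2) (μ₁.prod μ₂)) :
    ∀ (i : Fin d) (ε : ℝ), 0 < ε → μ {x | ε < x i} < ⊤ := by
  intro i ε hε
  obtain ⟨C, hC, hCb⟩ := coord_bound nrm hnn hdef hhom htri i
  have hmeas : Measurable (fun p : ℝ × (Fin d → ℝ) => p.1 • p.2) :=
    measurable_fst.smul measurable_snd
  have hset : MeasurableSet {x : Fin d → ℝ | ε < x i} :=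
    measurableSet_lt measurable_const (measurable_pi_apply i)
  subst hμ
  rw [Measure.map_apply hmeas hset]
  set B : Set (Fin d → ℝ) := {x | nrm x = 1 ∧ ∀ i, 0 ≤ x i}ᶜ with hB
  have hsub : (fun p : ℝ × (Fin d → ℝ) => p.1 • p.2) ⁻¹' {x | ε < x i} ⊆
      (Set.Ici (ε / C) ×ˢ Set.univ) ∪ (Set.univ ×ˢ B) := by
    rintro ⟨m, x⟩ hp
    simp only [Set.mem_preimage, Set.mem_setOf_eq, Pi.smul_apply, smul_eq_mul] at hp
    by_cases hx : x ∈ B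
    · exact Or.inr ⟨Set.mem_univ _, hx⟩
    · left
      refine ⟨?_, Set.mem_univ _⟩
      simp only [hB, Set.notMem_compl_iff, Set.mem_setOf_eq] at hx
      obtain ⟨hx1, hxnn⟩ := hx
      have hxiC : x i ≤ C := by
        have := hCb x
        rw [hx1, mul_one] at this
        exact (abs_le.1 this).2
      have hpos : 0 < m * x i := lt_trans hε hp
      have hxi : 0 < x i := by
        rcases lt_or_eq_of_le (hxnn i) with h | h
        · exact h
        · exfalso; rw [← h, mul_zero] at hpos; exact lt_irrefl 0 hpos
      have hm : ε / x i < m := by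
        rw [div_lt_iff₀ hxi]; exact hp
      have : ε / C ≤ ε / x i := div_le_div_of_nonneg_left hε.le hxi hxiC
      exact Set.mem_Ici.2 (this.trans hm.le)
  calc (μ₁.prod μ₂) ((fun p : ℝ × (Fin d → ℝ) => p.1 • p.2) ⁻¹' {x | ε < x i})
      ≤ (μ₁.prod μ₂) ((Set.Ici (ε / C) ×ˢ Set.univ) ∪ (Set.univ ×ˢ B)) :=
        measure_mono hsub
    _ ≤ (μ₁.prod μ₂) (Set.Ici (ε / C) ×ˢ Set.univ) + (μ₁.prod μ₂) (Set.univ ×ˢ B) :=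
        measure_union_le _ _
    _ = μ₁ (Set.Ici (ε / C)) * μ₂ Set.univ + μ₁ Set.univ * μ₂ B := by
        rw [Measure.prod_prod, Measure.prod_prod]
    _ = μ₁ (Set.Ici (ε / C)) := by
        rw [hμ₂supp, measure_univ, mul_one, mul_zero, add_zero]
    _ < ⊤ := hμ₁fin _ (div_pos hε hC)
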